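/- Let D be a 3-dicritical digraph distinct from the bidirected complete graph ↔K3 and from the directed wheel W3, and let ↔T be a bidirected tree contained in D, corresponding to a tree T. Then the number of unordered pairs {u, v} of vertices of T such that neither the arc uv nor the arc vu is in D is at least dearth(T). -/

import Mathlib

/-- A (loopless, simple) digraph on vertex type `V`. -/
structure SimpleDigraph (V : Type) where
  Adj : V → V → Prop
  loopless : ∀ v, ¬ Adj v v

namespace SimpleDigraph

/-- A set of arcs (given as a relation) is acyclic if it admits no directed closed walk. -/
def AcyclicRel {V : Type} (A : V → V → Prop) : Prop :=
  ∀ v, ¬ Relation.TransGen A v v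

/-- A set of arcs is 2-dicolourable if the vertices can be coloured with two colours
so that each colour class induces an acyclic subdigraph. -/
def Dicolourable2Rel {V : Type} (A : V → V → Prop) : Prop :=
  ∃ φ : V → Fin 2, ∀ i : Fin 2,
    AcyclicRel (fun a b => A a b ∧ φ a = i ∧ φ b = i)

/-- A digraph is 2-dicolourable if its vertices can be coloured with two colours
so that each colour class induces an acyclic subdigraph. -/
def Dicolourable2 {V : Type} (D : SimpleDigraph V) : Prop :=
  Dicolourable2Rel D.Adj

/-- `(S, A)` describes a subdigraph of `D`: its vertex set is `S` and its arcs
are given by `A`, which must join vertices of `S` and be arcs of `D`. -/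
def IsSubdigraphOn {V : Type} (D : SimpleDigraph V) (S : Set V) (A : V → V → Prop) : Prop :=
  ∀ u v, A u v → u ∈ S ∧ v ∈ S ∧ D.Adj u v

/-- `D` is 3-dicritical: `D` is not 2-dicolourable, but every proper subdigraph of `D`
(one missing a vertex or an arc) is 2-dicolourable. -/
def Dicritical3 {V : Type} (D : SimpleDigraph V) : Prop :=
  ¬ D.Dicolourable2 ∧
    ∀ (S : Set V) (A : V → V → Prop), D.IsSubdigraphOn S A →
      (S ≠ Set.univ ∨ A ≠ D.Adj) → Dicolourable2Rel A

/-- A digraph is semi-complete if any two distinct vertices are joined by at least one arc. -/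
def SemiComplete {V : Type} (D : SimpleDigraph V) : Prop :=
  ∀ u v : V, u ≠ v → D.Adj u v ∨ D.Adj v u

/-- A tournament is a semi-complete digraph with no digon. -/
def IsTournament {V : Type} (D : SimpleDigraph V) : Prop :=
  D.SemiComplete ∧ ∀ u v : V, ¬ (D.Adj u v ∧ D.Adj v u)

/-- Isomorphism of digraphs. -/
def Iso {V W : Type} (D : SimpleDigraph V) (E : SimpleDigraph W) : Prop :=
  ∃ e : V ≃ W, ∀ u v : V, D.Adj u v ↔ E.Adj (e u) (e v)

/-- `D` contains (a copy of) `H` as a subdigraph. -/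
def ContainsSub {V W : Type} (D : SimpleDigraph V) (H : SimpleDigraph W) : Prop :=
  ∃ f : W → V, Function.Injective f ∧ ∀ a b, H.Adj a b → D.Adj (f a) (f b)

/-- `D` contains (a copy of) `H` as an induced subdigraph. -/
def ContainsInduced {V W : Type} (D : SimpleDigraph V) (H : SimpleDigraph W) : Prop :=
  ∃ f : W → V, Function.Injective f ∧ ∀ a b, H.Adj a b ↔ D.Adj (f a) (f b)

end SimpleDigraph

/-- An auxiliary constructor: the digraph on `Fin n` whose arcs are the pairs in `l`. -/
def digraphOfPairs (n : ℕ) (l : List (ℕ × ℕ)) (h : ∀ v : Fin n, (v.val, v.val) ∉ l) :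
    SimpleDigraph (Fin n) :=
  ⟨fun u v => (u.val, v.val) ∈ l, h⟩

/-- The bidirected complete graph `↔K2` on two vertices (a digon). -/
def biK2 : SimpleDigraph (Fin 2) :=
  ⟨fun u v => u ≠ v, fun v h => h rfl⟩

/-- The bidirected complete graph `↔K3` on three vertices. -/
def biK3 : SimpleDigraph (Fin 3) :=
  ⟨fun u v => u ≠ v, fun v h => h rfl⟩

/-- The directed cycle `C3` on three vertices. -/
def dirC3 : SimpleDigraph (Fin 3) :=
  ⟨fun u v => v = u + 1, by decide⟩

/-- The directed wheel `W3`: a directed triangle `0 → 1 → 2 → 0` together with a hub `3`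
joined by a digon to each triangle vertex. -/
def dirW3 : SimpleDigraph (Fin 4) :=
  digraphOfPairs 4 [(3,0),(0,3),(3,1),(1,3),(3,2),(2,3),(0,1),(1,2),(2,0)] (by decide)

/-- The digraph `H5` on vertices `u0, …, u4`: digons between `u0,u1` and between `u0,u4`,
and simple arcs `u4u1, u1u3, u1u2, u3u4, u2u4, u3u0, u0u2, u2u3`. -/
def digraphH5 : SimpleDigraph (Fin 5) :=
  digraphOfPairs 5 [(0,1),(1,0),(0,4),(4,0),(4,1),(1,3),(1,2),(3,4),(2,4),(3,0),(0,2),(2,3)]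
    (by decide)

/-- The Paley tournament `P7` on `ℤ/7ℤ`: an arc from `i` to `j` iff `j - i ∈ {1, 2, 4}`. -/
def dirP7 : SimpleDigraph (Fin 7) :=
  ⟨fun i j => j - i = 1 ∨ j - i = 2 ∨ j - i = 4, by decide⟩

/-- The rotative digraph `R(↔K2, ↔K2)`: digons `{0,1}` and `{2,3}`, all arcs from `{0,1}`
to `{2,3}`, all arcs from `{2,3}` to the extra vertex `4`, all arcs from `4` to `{0,1}`. -/
def rotK2K2 : SimpleDigraph (Fin 5) :=
  digraphOfPairs 5 [(0,1),(1,0),(2,3),(3,2),(0,2),(0,3),(1,2),(1,3),(2,4),(3,4),(4,0),(4,1)]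
    (by decide)

/-- The rotative digraph `R(↔K2, C3)`. -/
def rotK2C3 : SimpleDigraph (Fin 6) :=
  digraphOfPairs 6 [(0,1),(1,0),(2,3),(3,4),(4,2),(0,2),(0,3),(0,4),(1,2),(1,3),(1,4),
    (2,5),(3,5),(4,5),(5,0),(5,1)] (by decide)

/-- The rotative digraph `R(C3, ↔K2)`. -/
def rotC3K2 : SimpleDigraph (Fin 6) :=
  digraphOfPairs 6 [(0,1),(1,2),(2,0),(3,4),(4,3),(0,3),(0,4),(1,3),(1,4),(2,3),(2,4),
    (3,5),(4,5),(5,0),(5,1),(5,2)] (by decide)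

/-- The rotative digraph `R(C3, C3)`. -/
def rotC3C3 : SimpleDigraph (Fin 7) :=
  digraphOfPairs 7 [(0,1),(1,2),(2,0),(3,4),(4,5),(5,3),(0,3),(0,4),(0,5),(1,3),(1,4),(1,5),
    (2,3),(2,4),(2,5),(3,6),(4,6),(5,6),(6,0),(6,1),(6,2)] (by decide)

/-- The dearth of a graph `T`:
`Σ_{v : deg(v) ≥ 3} deg(v)(deg(v)-1)/6` plus the number of odd pairs of `T`
(pairs of non-adjacent vertices at odd distance). -/
noncomputable def dearth {W : Type} [Fintype W] (T : SimpleGraph W) [DecidableRel T.Adj] : ℚ :=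
  (∑ v ∈ Finset.univ.filter (fun v => 3 ≤ T.degree v),
      (T.degree v : ℚ) * ((T.degree v : ℚ) - 1) / 6) +
  (Nat.card {p : Sym2 W // ∃ u w : W, p = s(u, w) ∧ u ≠ w ∧ ¬ T.Adj u w ∧ Odd (T.dist u w)} : ℚ)

section Helpers

open SimpleDigraph

variable {V : Type}

lemma acyclic_mono {R S : V → V → Prop} (h : ∀ a b, R a b → S a b) (hS : AcyclicRel S) :
    AcyclicRel R := fun v hv => hS v (Relation.TransGen.mono h _ _ hv)

lemma fin2_eq_of_ne_of_ne {a b c : Fin 2} (h1 : a ≠ b) (h2 : a ≠ c) : b = c := by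
  revert h1 h2; revert a b c; decide

lemma fin2_iff_of_ne {a b c : Fin 2} (h1 : a ≠ b) : (a = c ↔ ¬ b = c) := by
  revert h1; revert a b c; decide

lemma digon_ne {A : V → V → Prop} {φ : V → Fin 2}
    (hφ : ∀ i, AcyclicRel fun a b => A a b ∧ φ a = i ∧ φ b = i)
    {a b : V} (hab : A a b) (hba : A b a) : φ a ≠ φ b := by
  intro h
  exact hφ (φ b) a
    (Relation.TransGen.head ⟨hab, h, rfl⟩ (Relation.TransGen.single ⟨hba, rfl, h⟩))

/-- Deleting one arc of a 3-dicritical digraph yields a 2-dicolouring in which the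
endpoints of the deleted arc receive the same colour. -/
lemma exists_coloring_del {D : SimpleDigraph V} (hD : D.Dicritical3) {x y : V}
    (hxy : D.Adj x y) :
    ∃ φ : V → Fin 2,
      (∀ i, AcyclicRel fun a b => (D.Adj a b ∧ ¬(a = x ∧ b = y)) ∧ φ a = i ∧ φ b = i) ∧
      φ x = φ y := by
  set A : V → V → Prop := fun a b => D.Adj a b ∧ ¬(a = x ∧ b = y) with hA
  have hsub : D.IsSubdigraphOn Set.univ A := fun u v h => ⟨trivial, trivial, h.1⟩
  have hne : A ≠ D.Adj := by
    intro h
    have e : A x y = D.Adj x y := congrFun (congrFun h x) y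
    have : A x y := e.symm ▸ hxy
    exact this.2 ⟨rfl, rfl⟩
  obtain ⟨φ, hφ⟩ := hD.2 Set.univ A hsub (Or.inr hne)
  refine ⟨φ, hφ, ?_⟩
  by_contra hne2
  exact hD.1 ⟨φ, fun i => acyclic_mono (fun a b hab =>
    ⟨⟨hab.1, fun ⟨ea, eb⟩ => hne2 (by subst ea; subst eb; exact hab.2.1.trans hab.2.2.symm)⟩,
      hab.2.1, hab.2.2⟩) (hφ i)⟩

lemma transGen_union_aux {R : V → V → Prop} {x y c d : V}
    (h : Relation.TransGen (fun a b => R a b ∨ (a = x ∧ b = y)) c d) :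
    Relation.TransGen R c d ∨
      (Relation.ReflTransGen R c x ∧ Relation.ReflTransGen R y d) := by
  induction h with
  | single h =>
    rcases h with h | ⟨rfl, rfl⟩
    · exact Or.inl (.single h)
    · exact Or.inr ⟨.refl, .refl⟩
  | tail _ step ih =>
    rcases step with hstep | ⟨rfl, rfl⟩
    · rcases ih with ih | ⟨h1, h2⟩
      · exact Or.inl (ih.tail hstep)
      · exact Or.inr ⟨h1, h2.tail hstep⟩
    · rcases ih with ih | ⟨h1, h2⟩
      · exact Or.inr ⟨ih.to_reflTransGen, .refl⟩
      · exact Or.inr ⟨h1, .refl⟩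

/-- The main "transitive triangle" argument: a 3-dicritical digraph has no vertex `p`
joined by digons to three vertices `x,y,z` carrying arcs `x→y`, `y→z`, `x→z`. -/
lemma no_transitive_triangle {D : SimpleDigraph V} (hD : D.Dicritical3)
    {p x y z : V} (hpx : p ≠ x) (hpy : p ≠ y) (hpz : p ≠ z)
    (hxy : x ≠ y) (hxz : x ≠ z) (hyz : y ≠ z)
    (dpx : D.Adj p x ∧ D.Adj x p) (dpy : D.Adj p y ∧ D.Adj y p)
    (dpz : D.Adj p z ∧ D.Adj z p)
    (axy : D.Adj x y) (ayz : D.Adj y z) (axz : D.Adj x z) : False := by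
  obtain ⟨φ, hφ, hfix⟩ := exists_coloring_del hD axz
  set A : V → V → Prop := fun a b => D.Adj a b ∧ ¬(a = x ∧ b = z) with hA
  have hdx : φ p ≠ φ x :=
    digon_ne hφ ⟨dpx.1, fun h => hpx h.1⟩ ⟨dpx.2, fun h => hpz h.2⟩
  have hdy : φ p ≠ φ y :=
    digon_ne hφ ⟨dpy.1, fun h => hpx h.1⟩ ⟨dpy.2, fun h => hxy h.1.symm⟩
  have hdz : φ p ≠ φ z :=
    digon_ne hφ ⟨dpz.1, fun h => hpx h.1⟩ ⟨dpz.2, fun h => hxz h.1.symm⟩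
  have exy : φ x = φ y := fin2_eq_of_ne_of_ne hdx hdy
  have exz : φ x = φ z := fin2_eq_of_ne_of_ne hdx hdz
  set i : Fin 2 := φ x with hi
  apply hD.1
  refine ⟨φ, fun j => ?_⟩
  by_cases hj : j = i
  · subst hj
    intro v hv
    set R : V → V → Prop := fun a b => (A a b ∧ φ a = i ∧ φ b = i) with hR
    have hmono : ∀ a b, (D.Adj a b ∧ φ a = i ∧ φ b = i) → R a b ∨ (a = x ∧ b = z) := by
      intro a b hab
      by_cases hcase : a = x ∧ b = z
      · exact Or.inr hcase
      · exact Or.inl ⟨⟨hab.1, hcase⟩, hab.2.1, hab.2.2⟩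
    rcases transGen_union_aux (Relation.TransGen.mono hmono _ _ hv) with hc | ⟨h1, h2⟩
    · exact hφ i v hc
    · have hzx : Relation.ReflTransGen R z x := h2.trans h1
      have hxz' : Relation.TransGen R x z :=
        Relation.TransGen.tail (Relation.TransGen.single
          ⟨⟨axy, fun h => hyz h.2⟩, rfl, exy.symm⟩) ⟨⟨ayz, fun h => hxy h.1.symm⟩, exy.symm, exz.symm⟩
      exact hφ i x (hxz'.trans_left hzx)
  · -- colour class j avoids x, so the deleted arc is irrelevant
    refine acyclic_mono (fun a b hab => ?_) (hφ j)
    refine ⟨⟨hab.1, fun hc => hj ?_⟩, hab.2.1, hab.2.2⟩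
    rw [← hab.2.1, hc.1, hi]

end Helpers
section Helpers2

open SimpleDigraph

variable {V : Type}

/-- A 3-dicritical digraph not isomorphic to `dirW3` has no vertex `p` joined by digons
to the three vertices of a directed triangle `x→y→z→x`. -/
lemma no_dirW3_config {D : SimpleDigraph V} (hD : D.Dicritical3) (hW3 : ¬ D.Iso dirW3)
    {p x y z : V} (hpx : p ≠ x) (hpy : p ≠ y) (hpz : p ≠ z)
    (hxy : x ≠ y) (hxz : x ≠ z) (hyz : y ≠ z)
    (dpx : D.Adj p x ∧ D.Adj x p) (dpy : D.Adj p y ∧ D.Adj y p)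
    (dpz : D.Adj p z ∧ D.Adj z p)
    (axy : D.Adj x y) (ayz : D.Adj y z) (azx : D.Adj z x) : False := by
  set A : V → V → Prop := fun u v =>
    (u = p ∧ v = x) ∨ (u = p ∧ v = y) ∨ (u = p ∧ v = z) ∨
    (u = x ∧ v = p) ∨ (u = y ∧ v = p) ∨ (u = z ∧ v = p) ∨
    (u = x ∧ v = y) ∨ (u = y ∧ v = z) ∨ (u = z ∧ v = x) with hAdef
  have hApx : A p x := Or.inl ⟨rfl, rfl⟩
  have hApy : A p y := Or.inr (Or.inl ⟨rfl, rfl⟩)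
  have hApz : A p z := Or.inr (Or.inr (Or.inl ⟨rfl, rfl⟩))
  have hAxp : A x p := Or.inr (Or.inr (Or.inr (Or.inl ⟨rfl, rfl⟩)))
  have hAyp : A y p := Or.inr (Or.inr (Or.inr (Or.inr (Or.inl ⟨rfl, rfl⟩))))
  have hAzp : A z p := Or.inr (Or.inr (Or.inr (Or.inr (Or.inr (Or.inl ⟨rfl, rfl⟩)))))
  have hAxy : A x y := Or.inr (Or.inr (Or.inr (Or.inr (Or.inr (Or.inr (Or.inl ⟨rfl, rfl⟩))))))
  have hAyz : A y z :=
    Or.inr (Or.inr (Or.inr (Or.inr (Or.inr (Or.inr (Or.inr (Or.inl ⟨rfl, rfl⟩)))))))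
  have hAzx : A z x :=
    Or.inr (Or.inr (Or.inr (Or.inr (Or.inr (Or.inr (Or.inr (Or.inr ⟨rfl, rfl⟩)))))))
  set S : Set V := {p, x, y, z} with hSdef
  have hmem : p ∈ S ∧ x ∈ S ∧ y ∈ S ∧ z ∈ S := by
    refine ⟨?_, ?_, ?_, ?_⟩ <;> simp [hSdef]
  have hsub : D.IsSubdigraphOn S A := by
    rintro u v (⟨rfl, rfl⟩ | ⟨rfl, rfl⟩ | ⟨rfl, rfl⟩ | ⟨rfl, rfl⟩ | ⟨rfl, rfl⟩ |
      ⟨rfl, rfl⟩ | ⟨rfl, rfl⟩ | ⟨rfl, rfl⟩ | ⟨rfl, rfl⟩)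
    exacts [⟨hmem.1, hmem.2.1, dpx.1⟩, ⟨hmem.1, hmem.2.2.1, dpy.1⟩, ⟨hmem.1, hmem.2.2.2, dpz.1⟩,
      ⟨hmem.2.1, hmem.1, dpx.2⟩, ⟨hmem.2.2.1, hmem.1, dpy.2⟩, ⟨hmem.2.2.2, hmem.1, dpz.2⟩,
      ⟨hmem.2.1, hmem.2.2.1, axy⟩, ⟨hmem.2.2.1, hmem.2.2.2, ayz⟩, ⟨hmem.2.2.2, hmem.2.1, azx⟩]
  have hnocol : ¬ Dicolourable2Rel A := by
    rintro ⟨φ, hφ⟩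
    have hdx : φ p ≠ φ x := digon_ne hφ hApx hAxp
    have hdy : φ p ≠ φ y := digon_ne hφ hApy hAyp
    have hdz : φ p ≠ φ z := digon_ne hφ hApz hAzp
    have exy : φ x = φ y := fin2_eq_of_ne_of_ne hdx hdy
    have exz : φ x = φ z := fin2_eq_of_ne_of_ne hdx hdz
    exact hφ (φ x) x (Relation.TransGen.head ⟨hAxy, rfl, exy.symm⟩
      (Relation.TransGen.head ⟨hAyz, exy.symm, exz.symm⟩
        (Relation.TransGen.single ⟨hAzx, exz.symm, rfl⟩)))
  by_cases hcrit : S ≠ Set.univ ∨ A ≠ D.Adj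
  · exact hnocol (hD.2 S A hsub hcrit)
  · push_neg at hcrit
    obtain ⟨hSuniv, hAeq⟩ := hcrit
    apply hW3
    set g : Fin 4 → V := fun i => if i = 0 then x else if i = 1 then y else if i = 2 then z else p with hg
    have e0 : ∀ i : Fin 4, (g i = x ↔ i = 0) := by
      intro i; fin_cases i <;> simp [hg, hpx, hpy, hpz, hxy, hxz, hyz, hpx.symm, hpy.symm, hpz.symm, hxy.symm, hxz.symm, hyz.symm]
    have e1 : ∀ i : Fin 4, (g i = y ↔ i = 1) := by
      intro i; fin_cases i <;> simp [hg, hpx, hpy, hpz, hxy, hxz, hyz, hpx.symm, hpy.symm, hpz.symm, hxy.symm, hxz.symm, hyz.symm]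
    have e2 : ∀ i : Fin 4, (g i = z ↔ i = 2) := by
      intro i; fin_cases i <;> simp [hg, hpx, hpy, hpz, hxy, hxz, hyz, hpx.symm, hpy.symm, hpz.symm, hxy.symm, hxz.symm, hyz.symm]
    have e3 : ∀ i : Fin 4, (g i = p ↔ i = 3) := by
      intro i; fin_cases i <;> simp [hg, hpx, hpy, hpz, hxy, hxz, hyz, hpx.symm, hpy.symm, hpz.symm, hxy.symm, hxz.symm, hyz.symm]
    have hall : ∀ i : Fin 4, g i = x ∨ g i = y ∨ g i = z ∨ g i = p := by
      intro i; fin_cases i <;> simp [hg]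
    have hginj : Function.Injective g := by
      intro i j hij
      rcases hall i with h | h | h | h
      · rw [(e0 i).mp h, (e0 j).mp (hij.symm.trans h)]
      · rw [(e1 i).mp h, (e1 j).mp (hij.symm.trans h)]
      · rw [(e2 i).mp h, (e2 j).mp (hij.symm.trans h)]
      · rw [(e3 i).mp h, (e3 j).mp (hij.symm.trans h)]
    have hgsurj : Function.Surjective g := by
      intro v
      have hv : v ∈ S := hSuniv ▸ Set.mem_univ v
      rcases hv with rfl | rfl | rfl | rfl
      · exact ⟨3, rfl⟩
      · exact ⟨0, rfl⟩
      · exact ⟨1, rfl⟩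
      · exact ⟨2, rfl⟩
    have key : ∀ i j : Fin 4, D.Adj (g i) (g j) ↔ dirW3.Adj i j := by
      intro i j
      rw [← hAeq]
      simp only [hAdef, e0, e1, e2, e3]
      have hW : dirW3.Adj i j ↔ ((i.val, j.val) ∈
          [((3:ℕ),(0:ℕ)),(0,3),(3,1),(1,3),(3,2),(2,3),(0,1),(1,2),(2,0)]) := Iff.rfl
      rw [hW]
      clear hW
      revert i j
      decide
    set e : V ≃ Fin 4 := (Equiv.ofBijective g ⟨hginj, hgsurj⟩).symm with he
    refine ⟨e, fun u v => ?_⟩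
    have hu : g (e u) = u := (Equiv.ofBijective g ⟨hginj, hgsurj⟩).apply_symm_apply u
    have hv : g (e v) = v := (Equiv.ofBijective g ⟨hginj, hgsurj⟩).apply_symm_apply v
    conv_lhs => rw [← hu, ← hv]
    exact key (e u) (e v)

end Helpers2
section Helpers3

open SimpleDigraph

variable {V W : Type}

/-- Among three digon-neighbours of a vertex in a 3-dicritical digraph (not `W3`),
some pair is joined by no arc. -/
lemma triple_nonadj {D : SimpleDigraph V} (hD : D.Dicritical3) (hW3 : ¬ D.Iso dirW3)
    {p x y z : V} (hpx : p ≠ x) (hpy : p ≠ y) (hpz : p ≠ z)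
    (hxy : x ≠ y) (hxz : x ≠ z) (hyz : y ≠ z)
    (dpx : D.Adj p x ∧ D.Adj x p) (dpy : D.Adj p y ∧ D.Adj y p)
    (dpz : D.Adj p z ∧ D.Adj z p) :
    (¬D.Adj x y ∧ ¬D.Adj y x) ∨ (¬D.Adj x z ∧ ¬D.Adj z x) ∨ (¬D.Adj y z ∧ ¬D.Adj z y) := by
  by_contra hcon
  push_neg at hcon
  obtain ⟨h1, h2, h3⟩ := hcon
  have a1 : D.Adj x y ∨ D.Adj y x := by tauto
  have a2 : D.Adj x z ∨ D.Adj z x := by tauto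
  have a3 : D.Adj y z ∨ D.Adj z y := by tauto
  rcases a1 with a1 | a1 <;> rcases a3 with a3 | a3 <;> rcases a2 with a2 | a2
  · exact no_transitive_triangle hD hpx hpy hpz hxy hxz hyz dpx dpy dpz a1 a3 a2
  · exact no_dirW3_config hD hW3 hpx hpy hpz hxy hxz hyz dpx dpy dpz a1 a3 a2
  · -- x→y, z→y, x→z : x→z→y? no: arcs x→y, z→y, x→z: transitive x,z,y
    exact no_transitive_triangle hD hpx hpz hpy hxz hxy (fun h => hyz h.symm) dpx dpz dpy a2 a3 a1
  · -- x→y, z→y, z→x : transitive z,x,y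
    exact no_transitive_triangle hD hpz hpx hpy (fun h => hxz h.symm) (fun h => hyz h.symm) hxy dpz dpx dpy a2 a1 a3
  · -- y→x, y→z, x→z : transitive y,x,z
    exact no_transitive_triangle hD hpy hpx hpz (fun h => hxy h.symm) hyz hxz dpy dpx dpz a1 a2 a3
  · -- y→x, y→z, z→x : transitive y,z,x
    exact no_transitive_triangle hD hpy hpz hpx hyz (fun h => hxy h.symm)
      (fun h => hxz h.symm) dpy dpz dpx a3 a2 a1
  · -- y→x, z→y, x→z : cycle x→z→y→x
    exact no_dirW3_config hD hW3 hpx hpz hpy hxz hxy (fun h => hyz h.symm) dpx dpz dpy a2 a3 a1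
  · -- y→x, z→y, z→x : transitive z,y,x
    exact no_transitive_triangle hD hpz hpy hpx (fun h => hyz h.symm) (fun h => hxz h.symm)
      (fun h => hxy h.symm) dpz dpy dpx a3 a1 a2

/-- Colour alternation along a bidirected walk. -/
lemma walk_parity {T : SimpleGraph W} {A : V → V → Prop} {φ : V → Fin 2}
    (hφ : ∀ i, SimpleDigraph.AcyclicRel fun a b => A a b ∧ φ a = i ∧ φ b = i)
    {f : W → V} (hdig : ∀ a b : W, T.Adj a b → A (f a) (f b) ∧ A (f b) (f a))
    {u w : W} (p : T.Walk u w) : (φ (f u) = φ (f w) ↔ Even p.length) := by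
  induction p with
  | nil => simp
  | @cons u u' w h p ih =>
    have h1 : φ (f u) ≠ φ (f u') := digon_ne hφ (hdig _ _ h).1 (hdig _ _ h).2
    rw [SimpleGraph.Walk.length_cons, Nat.even_add_one, ← ih]
    exact fin2_iff_of_ne h1

/-- No arc of `D` joins the images of two vertices at odd distance (at least 3) in `T`. -/
lemma no_arc_of_odd_dist {D : SimpleDigraph V} (hD : D.Dicritical3)
    {T : SimpleGraph W} (hT : T.IsTree) {f : W → V} (hinj : Function.Injective f)
    (hdigon : ∀ a b : W, T.Adj a b → D.Adj (f a) (f b) ∧ D.Adj (f b) (f a))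
    {u w : W} (hne : u ≠ w) (hnadj : ¬ T.Adj u w) (hodd : Odd (T.dist u w)) :
    ¬ D.Adj (f u) (f w) ∧ ¬ D.Adj (f w) (f u) := by
  suffices H : ∀ u w : W, u ≠ w → ¬ T.Adj u w → Odd (T.dist u w) → ¬ D.Adj (f u) (f w) by
    exact ⟨H u w hne hnadj hodd, H w u (Ne.symm hne) (fun h => hnadj h.symm)
      (by rwa [SimpleGraph.dist_comm])⟩
  clear hne hnadj hodd
  intro u w hne hnadj hodd harc
  obtain ⟨φ, hφ, hfix⟩ := exists_coloring_del hD harc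
  have hdig : ∀ a b : W, T.Adj a b →
      ((fun s t => D.Adj s t ∧ ¬(s = f u ∧ t = f w)) (f a) (f b) ∧
       (fun s t => D.Adj s t ∧ ¬(s = f u ∧ t = f w)) (f b) (f a)) := by
    intro a b hab
    refine ⟨⟨(hdigon a b hab).1, fun hc => ?_⟩, ⟨(hdigon a b hab).2, fun hc => ?_⟩⟩
    · exact hnadj (hinj hc.1 ▸ hinj hc.2 ▸ hab)
    · exact hnadj (hinj hc.2 ▸ hinj hc.1 ▸ hab.symm)
  have hdist : T.dist u w ≠ 0 := by
    intro h0; rw [h0] at hodd; exact (by decide : ¬ Odd 0) hodd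
  obtain ⟨pw, hpw⟩ := SimpleGraph.exists_walk_of_dist_ne_zero hdist
  have := (walk_parity hφ hdig pw).mp hfix
  rw [hpw] at this
  exact (Nat.not_odd_iff_even.mpr this) hodd

end Helpers3
section Helpers4

open SimpleGraph

variable {W : Type} {T : SimpleGraph W}

lemma tree_mid_walk_isPath (hT : T.IsTree) {a b v : W} (h1 : T.Adj v a) (h2 : T.Adj v b)
    (hab : a ≠ b) : (Walk.cons h1.symm (Walk.cons h2 Walk.nil) : T.Walk a b).IsPath := by
  rw [Walk.isPath_def]
  simp only [Walk.support_cons, Walk.support_nil]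
  exact List.nodup_cons.mpr ⟨by simp [h1.ne', hab], List.nodup_cons.mpr ⟨by simp [h2.ne], by simp⟩⟩

lemma tree_no_triangle (hT : T.IsTree) {a b v : W} (h1 : T.Adj v a) (h2 : T.Adj v b)
    (hab : T.Adj a b) : False := by
  have hpath := tree_mid_walk_isPath hT h1 h2 hab.ne
  have heq := hT.IsAcyclic.path_unique
    (⟨Walk.cons h1.symm (Walk.cons h2 Walk.nil), hpath⟩ : T.Path a b) (Path.singleton hab)
  have hs := congrArg (fun q : T.Path a b => q.1.support) heq
  simp [Path.singleton] at hs

lemma tree_unique_mid (hT : T.IsTree) {a b v v' : W} (hne : v ≠ v')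
    (h1 : T.Adj v a) (h2 : T.Adj v b) (h3 : T.Adj v' a) (h4 : T.Adj v' b)
    (hab : a ≠ b) : False := by
  have heq := hT.IsAcyclic.path_unique
    (⟨Walk.cons h1.symm (Walk.cons h2 Walk.nil), tree_mid_walk_isPath hT h1 h2 hab⟩ : T.Path a b)
    (⟨Walk.cons h3.symm (Walk.cons h4 Walk.nil), tree_mid_walk_isPath hT h3 h4 hab⟩ : T.Path a b)
  have hs := congrArg (fun q : T.Path a b => q.1.support) heq
  simp at hs
  exact hne hs

lemma tree_dist_two (hT : T.IsTree) {a b v : W} (h1 : T.Adj v a) (h2 : T.Adj v b)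
    (hab : a ≠ b) : T.dist a b = 2 ∧ ¬ T.Adj a b := by
  have hnadj : ¬ T.Adj a b := fun h => tree_no_triangle hT h1 h2 h
  have hle : T.dist a b ≤ 2 := by
    have := T.dist_le (Walk.cons h1.symm (Walk.cons h2 Walk.nil) : T.Walk a b)
    simpa using this
  have h0 : T.dist a b ≠ 0 := by
    rw [SimpleGraph.dist_ne_zero_iff_ne_and_reachable]
    exact ⟨hab, hT.isConnected.preconnected a b⟩
  have h1' : T.dist a b ≠ 1 := fun h => hnadj ((SimpleGraph.dist_eq_one_iff_adj.mp h))
  exact ⟨by omega, hnadj⟩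

end Helpers4
section Helpers5

open SimpleDigraph

/-- Double counting: each vertex of degree `d ≥ 3` in the bidirected tree forces at least
`d(d-1)/6` totally non-adjacent pairs among its neighbours. -/
lemma vertex_count {V W : Type} [Fintype W] {D : SimpleDigraph V} (hD : D.Dicritical3)
    (hW3 : ¬ D.Iso dirW3) {T : SimpleGraph W} [DecidableRel T.Adj]
    {f : W → V} (hinj : Function.Injective f)
    (hdigon : ∀ a b : W, T.Adj a b → D.Adj (f a) (f b) ∧ D.Adj (f b) (f a))
    (v : W) (hdeg : 3 ≤ T.degree v) (P : Finset (Sym2 W))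
    (hP : ∀ a b : W, a ≠ b → T.Adj v a → T.Adj v b →
      ¬D.Adj (f a) (f b) → ¬D.Adj (f b) (f a) → s(a, b) ∈ P) :
    T.degree v * (T.degree v - 1) ≤ 6 * P.card := by
  classical
  set N := T.neighborFinset v with hN
  set d := T.degree v with hd
  have hdN : N.card = d := rfl
  have hchoice : ∀ t : Finset W, ∃ q : Sym2 W, t ∈ Finset.powersetCard 3 N →
      ∃ a b : W, q = s(a, b) ∧ a ≠ b ∧ a ∈ t ∧ b ∈ t ∧
        ¬D.Adj (f a) (f b) ∧ ¬D.Adj (f b) (f a) := by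
    intro t
    by_cases ht : t ∈ Finset.powersetCard 3 N
    · obtain ⟨hsub, hcard⟩ := Finset.mem_powersetCard.mp ht
      obtain ⟨a, b, c, hab, hac, hbc, rfl⟩ := Finset.card_eq_three.mp hcard
      have hva : T.Adj v a := (T.mem_neighborFinset v a).mp (hsub (by simp))
      have hvb : T.Adj v b := (T.mem_neighborFinset v b).mp (hsub (by simp))
      have hvc : T.Adj v c := (T.mem_neighborFinset v c).mp (hsub (by simp))
      have h1 : f v ≠ f a := fun h => hva.ne (hinj h)
      have h2 : f v ≠ f b := fun h => hvb.ne (hinj h)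
      have h3 : f v ≠ f c := fun h => hvc.ne (hinj h)
      have h4 : f a ≠ f b := fun h => hab (hinj h)
      have h5 : f a ≠ f c := fun h => hac (hinj h)
      have h6 : f b ≠ f c := fun h => hbc (hinj h)
      rcases triple_nonadj hD hW3 h1 h2 h3 h4 h5 h6
          (hdigon v a hva) (hdigon v b hvb) (hdigon v c hvc) with hc | hc | hc
      · exact ⟨s(a, b), fun _ => ⟨a, b, rfl, hab, by simp, by simp, hc.1, hc.2⟩⟩
      · exact ⟨s(a, c), fun _ => ⟨a, c, rfl, hac, by simp, by simp, hc.1, hc.2⟩⟩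
      · exact ⟨s(b, c), fun _ => ⟨b, c, rfl, hbc, by simp, by simp, hc.1, hc.2⟩⟩
    · exact ⟨s(v, v), fun h => absurd h ht⟩
  choose g hg using hchoice
  have hmaps : ∀ t ∈ Finset.powersetCard 3 N, g t ∈ P := by
    intro t ht
    obtain ⟨a, b, hq, hab, hat, hbt, hna1, hna2⟩ := hg t ht
    have hsub := (Finset.mem_powersetCard.mp ht).1
    rw [hq]
    exact hP a b hab ((T.mem_neighborFinset v a).mp (hsub hat))
      ((T.mem_neighborFinset v b).mp (hsub hbt)) hna1 hna2
  haveI : Nonempty W := ⟨v⟩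
  have hfiber : ∀ q ∈ P,
      ((Finset.powersetCard 3 N).filter (fun t => g t = q)).card ≤ d - 2 := by
    intro q _
    set Fq := (Finset.powersetCard 3 N).filter (fun t => g t = q) with hFq
    rcases Finset.eq_empty_or_nonempty Fq with he | ⟨t0, ht0⟩
    · simp [he]
    · have ht0' := Finset.mem_filter.mp ht0
      obtain ⟨a, b, hq0, hab, hat0, hbt0, _, _⟩ := hg t0 ht0'.1
      have hqe : q = s(a, b) := ht0'.2 ▸ hq0
      have key : ∀ t ∈ Fq, a ∈ t ∧ b ∈ t ∧ t ⊆ N ∧ t.card = 3 := by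
        intro t ht
        have htm := Finset.mem_filter.mp ht
        have hmem := Finset.mem_powersetCard.mp htm.1
        obtain ⟨a', b', hq', hab', hat, hbt, _, _⟩ := hg t htm.1
        have hss : s(a, b) = s(a', b') := by rw [← hqe, ← htm.2, hq']
        rcases Sym2.eq_iff.mp hss with ⟨rfl, rfl⟩ | ⟨rfl, rfl⟩
        · exact ⟨hat, hbt, hmem.1, hmem.2⟩
        · exact ⟨hbt, hat, hmem.1, hmem.2⟩
      set m : Finset W → W := fun t =>
        if h : (t \ {a, b}).Nonempty then h.choose else Classical.arbitrary W
        with hm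
      have hthird : ∀ t ∈ Fq, (t \ {a, b}) = {m t} ∧ m t ∈ t \ {a, b} := by
        intro t ht
        obtain ⟨hat, hbt, htN, htc⟩ := key t ht
        have hsub2 : ({a, b} : Finset W) ⊆ t := by
          intro w hw; rcases Finset.mem_insert.mp hw with rfl | hw
          · exact hat
          · exact (Finset.mem_singleton.mp hw) ▸ hbt
        have hc1 : (t \ {a, b}).card = 1 := by
          rw [Finset.card_sdiff_of_subset hsub2, htc, Finset.card_pair hab]
        obtain ⟨c, hc⟩ := Finset.card_eq_one.mp hc1
        have hne : (t \ {a, b}).Nonempty := ⟨c, hc ▸ Finset.mem_singleton_self c⟩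
        have hmin : m t ∈ t \ {a, b} := by
          rw [hm]; simp only [dif_pos hne]; exact hne.choose_spec
        have : m t = c := Finset.mem_singleton.mp (hc ▸ hmin)
        exact ⟨by rw [hc, this], hmin⟩
      have hinjOn : Set.InjOn m Fq := by
        intro t ht t' ht' hmm
        have h1 := hthird t ht
        have h2 := hthird t' ht'
        have e1 : t \ {a, b} = t' \ {a, b} := by rw [h1.1, h2.1, hmm]
        have r1 : t \ {a, b} ∪ {a, b} = t := Finset.sdiff_union_of_subset (by
          intro w hw; rcases Finset.mem_insert.mp hw with rfl | hw
          · exact (key t ht).1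
          · exact (Finset.mem_singleton.mp hw) ▸ (key t ht).2.1)
        have r2 : t' \ {a, b} ∪ {a, b} = t' := Finset.sdiff_union_of_subset (by
          intro w hw; rcases Finset.mem_insert.mp hw with rfl | hw
          · exact (key t' ht').1
          · exact (Finset.mem_singleton.mp hw) ▸ (key t' ht').2.1)
        rw [← r1, ← r2, e1]
      have hmapsN : ∀ t ∈ Fq, m t ∈ N \ {a, b} := by
        intro t ht
        have h1 := (hthird t ht).2
        have h2 := Finset.mem_sdiff.mp h1
        exact Finset.mem_sdiff.mpr ⟨(key t ht).2.2.1 h2.1, h2.2⟩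
      have hcard := Finset.card_le_card_of_injOn m hmapsN hinjOn
      have habN : ({a, b} : Finset W) ⊆ N := by
        obtain ⟨hat, hbt, htN, _⟩ := key t0 ht0
        intro w hw; rcases Finset.mem_insert.mp hw with rfl | hw
        · exact htN hat
        · exact (Finset.mem_singleton.mp hw) ▸ htN hbt
      have : (N \ ({a, b} : Finset W)).card = d - 2 := by
        rw [Finset.card_sdiff_of_subset habN, hdN, Finset.card_pair hab]
      omega
  have hcount := Finset.card_le_mul_card_image_of_maps_to hmaps (d - 2) hfiber
  rw [Finset.card_powersetCard, hdN] at hcount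
  have h6 : Nat.descFactorial d 3 = 6 * Nat.choose d 3 := by
    rw [Nat.descFactorial_eq_factorial_mul_choose]; norm_num [Nat.factorial]
  have hdf : Nat.descFactorial d 3 = (d - 2) * ((d - 1) * d) := by
    simp [Nat.descFactorial]
  have hkey : (d - 2) * ((d - 1) * d) ≤ (d - 2) * (6 * P.card) := by
    rw [← hdf, h6]
    calc 6 * Nat.choose d 3 ≤ 6 * ((d - 2) * P.card) := Nat.mul_le_mul_left 6 hcount
      _ = (d - 2) * (6 * P.card) := by ring
  have hpos : 0 < d - 2 := by omega
  have := Nat.le_of_mul_le_mul_left hkey hpos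
  calc d * (d - 1) = (d - 1) * d := Nat.mul_comm _ _
    _ ≤ 6 * P.card := this

end Helpers5
lemma natCard_subtype_eq_filter_card {α : Type} [Fintype α] (p : α → Prop) [DecidablePred p] :
    Nat.card {x // p x} = (Finset.univ.filter p).card := by
  simp [Nat.card_eq_fintype_card, Fintype.card_subtype]

section MainProof

open SimpleDigraph

theorem dearth_le_nonadjacent_pairs'
    {V W : Type} [Fintype V] [Fintype W] (D : SimpleDigraph V) (hD : D.Dicritical3)
    (hK3 : ¬ D.Iso biK3) (hW3 : ¬ D.Iso dirW3)
    (T : SimpleGraph W) [DecidableRel T.Adj] (hT : T.IsTree)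
    (f : W → V) (hinj : Function.Injective f)
    (hdigon : ∀ a b : W, T.Adj a b → D.Adj (f a) (f b) ∧ D.Adj (f b) (f a)) :
    dearth T ≤
      (Nat.card {p : Sym2 W // ∃ u w : W, p = s(u, w) ∧ u ≠ w ∧
        ¬ D.Adj (f u) (f w) ∧ ¬ D.Adj (f w) (f u)} : ℚ) := by
  classical
  set Bad : Finset (Sym2 W) := Finset.univ.filter (fun p => ∃ u w : W, p = s(u, w) ∧ u ≠ w ∧
      ¬ D.Adj (f u) (f w) ∧ ¬ D.Adj (f w) (f u)) with hBadDef
  set OddP : Finset (Sym2 W) := Finset.univ.filter (fun p => ∃ u w : W, p = s(u, w) ∧ u ≠ w ∧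
      ¬ T.Adj u w ∧ Odd (T.dist u w)) with hOddDef
  set Pv : W → Finset (Sym2 W) := fun v => Finset.univ.filter (fun p => ∃ a b : W,
      p = s(a, b) ∧ a ≠ b ∧ T.Adj v a ∧ T.Adj v b ∧
      ¬D.Adj (f a) (f b) ∧ ¬D.Adj (f b) (f a)) with hPvDef
  set F : Finset W := Finset.univ.filter (fun v => 3 ≤ T.degree v) with hFdef
  -- subset facts
  have hsubPv : ∀ v : W, Pv v ⊆ Bad := by
    intro v p hp
    obtain ⟨-, a, b, rfl, hab, hva, hvb, hn1, hn2⟩ := Finset.mem_filter.mp hp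
    exact Finset.mem_filter.mpr ⟨Finset.mem_univ _, a, b, rfl, hab, hn1, hn2⟩
  have hsubOdd : OddP ⊆ Bad := by
    intro p hp
    obtain ⟨-, u, w, rfl, hne, hnadj, hodd⟩ := Finset.mem_filter.mp hp
    have h := no_arc_of_odd_dist hD hT hinj hdigon hne hnadj hodd
    exact Finset.mem_filter.mpr ⟨Finset.mem_univ _, u, w, rfl, hne, h.1, h.2⟩
  have hdisjPv : ∀ v v' : W, v ≠ v' → Disjoint (Pv v) (Pv v') := by
    intro v v' hne
    rw [Finset.disjoint_left]
    intro p hp hp'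
    obtain ⟨-, a, b, rfl, hab, hva, hvb, -, -⟩ := Finset.mem_filter.mp hp
    obtain ⟨-, a', b', heq, hab', hva', hvb', -, -⟩ := Finset.mem_filter.mp hp'
    rcases Sym2.eq_iff.mp heq with ⟨rfl, rfl⟩ | ⟨rfl, rfl⟩
    · exact tree_unique_mid hT hne hva hvb hva' hvb' hab
    · exact tree_unique_mid hT hne hva hvb hvb' hva' hab
  have hdisjO : ∀ v : W, Disjoint (Pv v) OddP := by
    intro v
    rw [Finset.disjoint_left]
    intro p hp hp'
    obtain ⟨-, a, b, rfl, hab, hva, hvb, -, -⟩ := Finset.mem_filter.mp hp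
    obtain ⟨-, u, w, heq, hne, hnadj, hodd⟩ := Finset.mem_filter.mp hp'
    have hd2 : T.dist a b = 2 := (tree_dist_two hT hva hvb hab).1
    have : T.dist u w = 2 := by
      rcases Sym2.eq_iff.mp heq with ⟨rfl, rfl⟩ | ⟨rfl, rfl⟩
      · exact hd2
      · rw [SimpleGraph.dist_comm]; exact hd2
    rw [this] at hodd
    exact (by decide : ¬ Odd 2) hodd
  -- cardinality facts
  have hvc : ∀ v ∈ F, T.degree v * (T.degree v - 1) ≤ 6 * (Pv v).card := by
    intro v hv
    have hdeg : 3 ≤ T.degree v := (Finset.mem_filter.mp hv).2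
    refine vertex_count hD hW3 hinj hdigon v hdeg (Pv v) ?_
    intro a b hab hva hvb hn1 hn2
    exact Finset.mem_filter.mpr ⟨Finset.mem_univ _, a, b, rfl, hab, hva, hvb, hn1, hn2⟩
  have hbi : (F.biUnion Pv).card = ∑ v ∈ F, (Pv v).card :=
    Finset.card_biUnion (fun v _ v' _ h => hdisjPv v v' h)
  have hdisj : Disjoint (F.biUnion Pv) OddP :=
    Finset.disjoint_biUnion_left F Pv OddP |>.mpr (fun v _ => hdisjO v)
  have hunion : (F.biUnion Pv) ∪ OddP ⊆ Bad :=
    Finset.union_subset (Finset.biUnion_subset.mpr fun v _ => hsubPv v) hsubOdd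
  have hcards : (∑ v ∈ F, (Pv v).card) + OddP.card ≤ Bad.card := by
    rw [← hbi, ← Finset.card_union_of_disjoint hdisj]
    exact Finset.card_le_card hunion
  -- conclude over ℚ
  have hOddCard : Nat.card {p : Sym2 W // ∃ u w : W, p = s(u, w) ∧ u ≠ w ∧
      ¬ T.Adj u w ∧ Odd (T.dist u w)} = OddP.card := by
    rw [hOddDef]; exact natCard_subtype_eq_filter_card _
  have hBadCard : Nat.card {p : Sym2 W // ∃ u w : W, p = s(u, w) ∧ u ≠ w ∧
      ¬ D.Adj (f u) (f w) ∧ ¬ D.Adj (f w) (f u)} = Bad.card := by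
    rw [hBadDef]; exact natCard_subtype_eq_filter_card _
  rw [dearth, hOddCard, hBadCard]
  have hsum : ∑ v ∈ Finset.univ.filter (fun v => 3 ≤ T.degree v),
      ((T.degree v : ℚ) * ((T.degree v : ℚ) - 1) / 6) ≤ (∑ v ∈ F, ((Pv v).card : ℚ)) := by
    rw [hFdef]
    apply Finset.sum_le_sum
    intro v hv
    have h := hvc v (by rwa [hFdef])
    have hdeg : 3 ≤ T.degree v := (Finset.mem_filter.mp hv).2
    have hc : ((T.degree v * (T.degree v - 1) : ℕ) : ℚ) ≤ ((6 * (Pv v).card : ℕ) : ℚ) := by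
      exact_mod_cast h
    rw [div_le_iff₀ (by norm_num : (0:ℚ) < 6)]
    push_cast [Nat.cast_sub (by omega : 1 ≤ T.degree v)] at hc
    linarith
  have hfin : (∑ v ∈ F, ((Pv v).card : ℚ)) + (OddP.card : ℚ) ≤ (Bad.card : ℚ) := by
    have : ((∑ v ∈ F, (Pv v).card : ℕ) : ℚ) + ((OddP.card : ℕ) : ℚ) ≤ ((Bad.card : ℕ) : ℚ) := by
      exact_mod_cast hcards
    push_cast at this ⊢
    linarith
  linarith

end MainProof

/-- Let `D` be a 3-dicritical digraph distinct from `↔K3` and from the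
directed wheel `W3`, and let `↔T` be a bidirected tree contained in `D`, given by a tree
`T` and an injection `f` of its vertices into `D` such that every edge of `T` corresponds
to a digon of `D`. Then the number of unordered pairs of distinct vertices of `T` joined
by no arc of `D` is at least `dearth(T)`. -/
theorem dearth_le_nonadjacent_pairs
    {V W : Type} [Fintype V] [Fintype W] (D : SimpleDigraph V) (hD : D.Dicritical3)
    (hK3 : ¬ D.Iso biK3) (hW3 : ¬ D.Iso dirW3)
    (T : SimpleGraph W) [DecidableRel T.Adj] (hT : T.IsTree)
    (f : W → V) (hinj : Function.Injective f)
    (hdigon : ∀ a b : W, T.Adj a b → D.Adj (f a) (f b) ∧ D.Adj (f b) (f a)) :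
    dearth T ≤
      (Nat.card {p : Sym2 W // ∃ u w : W, p = s(u, w) ∧ u ≠ w ∧
        ¬ D.Adj (f u) (f w) ∧ ¬ D.Adj (f w) (f u)} : ℚ) := by
  exact dearth_le_nonadjacent_pairs' D hD hK3 hW3 T hT f hinj hdigon
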